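/- arXiv:1606.08341 — 2 statements merged into one kernel-verified Lean document; each statement's English description precedes it below -/
import Mathlib

section
/- Suppose X is not ℙ-almost surely constant and that there exists β₀ > 0 with f(β₀) < 0. Then there exists a unique β_c ∈ (0, β₀) with f(β_c) = 0; moreover f(β) > 0 for all β ∈ [0, β_c) and f(β) < 0 for all β > β_c. -/
open MeasureTheory Real

/-- The Laplace transform `λ_β = 𝔼[e^{-βX}]` of the conductance law. -/
noncomputable def lam {Ω : Type*} [MeasurableSpace Ω] (P : Measure Ω) (X : Ω → ℝ) (β : ℝ) : ℝ :=
  ∫ ω, Real.exp (-β * X ω) ∂P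

/-- The annealed critical point `h_a(β) = log(ℓ-1) + log λ_β`. -/
noncomputable def annealedCP {Ω : Type*} [MeasurableSpace Ω] (P : Measure Ω) (X : Ω → ℝ)
    (ℓ : ℕ) (β : ℝ) : ℝ :=
  Real.log ((ℓ : ℝ) - 1) + Real.log (lam P X β)

/-- The function `f(β) = h_a(β) + β·𝔼[X e^{-βX}]/λ_β  (= h_a(β) - β h_a'(β))`. -/
noncomputable def fDS {Ω : Type*} [MeasurableSpace Ω] (P : Measure Ω) (X : Ω → ℝ)
    (ℓ : ℕ) (β : ℝ) : ℝ :=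
  annealedCP P X ℓ β + β * (∫ ω, X ω * Real.exp (-β * X ω) ∂P) / lam P X β

section helpers
variable {Ω : Type*} [MeasurableSpace Ω] (P : Measure Ω) [IsProbabilityMeasure P]
  (X : Ω → ℝ) (hX : Measurable X)
  (hInt : ∀ s : ℝ, Integrable (fun ω => Real.exp (-s * X ω)) P)


lemma my_abs_le (x : ℝ) : |x| ≤ exp x + exp (-x) := by
  rcases le_total 0 x with h | h
  · rw [abs_of_nonneg h]; nlinarith [Real.add_one_le_exp x, Real.exp_pos (-x)]
  · rw [abs_of_nonpos h]; nlinarith [Real.add_one_le_exp (-x), Real.exp_pos x]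

lemma my_exp_bd {β b : ℝ} (x : ℝ) (hb : |b - β| < 1) :
    exp (-b*x) ≤ exp (-(β-1)*x) + exp (-(β+1)*x) := by
  rw [abs_lt] at hb
  rcases le_total 0 x with h | h
  · have : -b*x ≤ -(β-1)*x := by nlinarith
    nlinarith [Real.exp_le_exp.2 this, Real.exp_pos (-(β+1)*x)]
  · have : -b*x ≤ -(β+1)*x := by nlinarith
    nlinarith [Real.exp_le_exp.2 this, Real.exp_pos (-(β-1)*x)]

lemma my_bound1 {β b : ℝ} (x : ℝ) (hb : |b - β| < 1) :
    |x| * exp (-b*x) ≤ exp (-(β-2)*x) + 2*exp (-β*x) + exp (-(β+2)*x) := by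
  calc |x| * exp (-b*x) ≤ (exp x + exp (-x)) * (exp (-(β-1)*x) + exp (-(β+1)*x)) :=
        mul_le_mul (my_abs_le x) (my_exp_bd x hb) (Real.exp_pos _).le (by positivity)
    _ = _ := by simp only [add_mul, mul_add, ← Real.exp_add]; ring_nf

lemma my_bound2 {β b : ℝ} (x : ℝ) (hb : |b - β| < 1) :
    x^2 * exp (-b*x) ≤ exp (-(β-3)*x) + 3*exp (-(β-1)*x) + 3*exp (-(β+1)*x) + exp (-(β+3)*x) := by
  have h1 : x^2 ≤ exp (2*x) + 2 + exp (-(2*x)) := by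
    have := my_abs_le x
    have h3 : (exp x + exp (-x))^2 = exp (2*x) + 2 + exp (-(2*x)) := by
      have e1 : exp x * exp (-x) = 1 := by rw [← Real.exp_add]; simp
      have e2 : exp x * exp x = exp (2*x) := by rw [← Real.exp_add]; ring_nf
      have e3 : exp (-x) * exp (-x) = exp (-(2*x)) := by rw [← Real.exp_add]; ring_nf
      nlinarith
    nlinarith [abs_nonneg x, sq_abs x, Real.exp_pos x, Real.exp_pos (-x)]
  calc x^2 * exp (-b*x) ≤ (exp (2*x) + 2 + exp (-(2*x))) * (exp (-(β-1)*x) + exp (-(β+1)*x)) :=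
        mul_le_mul h1 (my_exp_bd x hb) (Real.exp_pos _).le (by positivity)
    _ = _ := by simp only [add_mul, mul_add, ← Real.exp_add]; ring_nf

include hX hInt in
lemma my_intX (β : ℝ) : Integrable (fun ω => X ω * Real.exp (-β * X ω)) P := by
  have hb : Integrable (fun ω => exp (-(β-2) * X ω) + 2*exp (-β * X ω) + exp (-(β+2) * X ω)) P :=
    ((hInt (β-2)).add ((hInt β).const_mul 2)).add (hInt (β+2))
  refine hb.mono ((hX.mul ((hX.const_mul (-β)).exp)).aestronglyMeasurable) ?_
  refine Filter.Eventually.of_forall fun ω => ?_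
  rw [Real.norm_eq_abs, abs_mul, Real.abs_exp]
  have := my_bound1 (β := β) (b := β) (X ω) (by simpa using zero_lt_one)
  rw [Real.norm_eq_abs]
  refine this.trans (le_abs_self _)

include hX hInt in
lemma my_intX2 (β : ℝ) : Integrable (fun ω => X ω ^ 2 * Real.exp (-β * X ω)) P := by
  have hb : Integrable (fun ω => exp (-(β-3) * X ω) + 3*exp (-(β-1) * X ω)
      + 3*exp (-(β+1) * X ω) + exp (-(β+3) * X ω)) P :=
    (((hInt (β-3)).add ((hInt (β-1)).const_mul 3)).add ((hInt (β+1)).const_mul 3)).add (hInt (β+3))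
  refine hb.mono (((hX.pow_const 2).mul ((hX.const_mul (-β)).exp)).aestronglyMeasurable) ?_
  refine Filter.Eventually.of_forall fun ω => ?_
  rw [Real.norm_eq_abs, abs_mul, Real.abs_exp, abs_of_nonneg (sq_nonneg (X ω)), Real.norm_eq_abs]
  exact (my_bound2 (β := β) (b := β) (X ω) (by simpa using zero_lt_one)).trans (le_abs_self _)

include hX hInt in
lemma my_hL (β : ℝ) : HasDerivAt (fun b => ∫ ω, Real.exp (-b * X ω) ∂P)
    (- ∫ ω, X ω * Real.exp (-β * X ω) ∂P) β := by
  have key := hasDerivAt_integral_of_dominated_loc_of_deriv_le (μ := P) (x₀ := β) (s := Metric.ball β 1)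
    (F := fun b ω => Real.exp (-b * X ω)) (F' := fun b ω => -X ω * Real.exp (-b * X ω))
    (bound := fun ω => exp (-(β-2) * X ω) + 2*exp (-β * X ω) + exp (-(β+2) * X ω))
    (Metric.ball_mem_nhds β one_pos)
    (Filter.Eventually.of_forall fun b => ((hX.const_mul (-b)).exp).aestronglyMeasurable)
    (hInt β)
    ((hX.neg.mul ((hX.const_mul (-β)).exp)).aestronglyMeasurable)
    (Filter.Eventually.of_forall fun ω => fun b hb => by
      rw [Real.norm_eq_abs, abs_mul, abs_neg, Real.abs_exp]
      exact my_bound1 (X ω) (by simpa [Real.dist_eq] using hb))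
    (((hInt (β-2)).add ((hInt β).const_mul 2)).add (hInt (β+2)))
    (Filter.Eventually.of_forall fun ω => fun b _ => by
      have h : HasDerivAt (fun b : ℝ => -b * X ω) (-X ω) b := by
        simpa using (hasDerivAt_neg b).mul_const (X ω)
      simpa [mul_comm] using h.exp)
  simpa [neg_mul, integral_neg] using key.2

include hX hInt in
lemma my_hM (β : ℝ) : HasDerivAt (fun b => ∫ ω, X ω * Real.exp (-b * X ω) ∂P)
    (- ∫ ω, X ω ^ 2 * Real.exp (-β * X ω) ∂P) β := by
  have key := hasDerivAt_integral_of_dominated_loc_of_deriv_le (μ := P) (x₀ := β) (s := Metric.ball β 1)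
    (F := fun b ω => X ω * Real.exp (-b * X ω)) (F' := fun b ω => -(X ω ^ 2) * Real.exp (-b * X ω))
    (bound := fun ω => exp (-(β-3) * X ω) + 3*exp (-(β-1) * X ω)
      + 3*exp (-(β+1) * X ω) + exp (-(β+3) * X ω))
    (Metric.ball_mem_nhds β one_pos)
    (Filter.Eventually.of_forall fun b => (hX.mul ((hX.const_mul (-b)).exp)).aestronglyMeasurable)
    (my_intX P X hX hInt β)
    (((hX.pow_const 2).neg.mul ((hX.const_mul (-β)).exp)).aestronglyMeasurable)
    (Filter.Eventually.of_forall fun ω => fun b hb => by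
      rw [Real.norm_eq_abs, abs_mul, abs_neg, Real.abs_exp, abs_of_nonneg (sq_nonneg (X ω))]
      exact my_bound2 (X ω) (by simpa [Real.dist_eq] using hb))
    ((((hInt (β-3)).add ((hInt (β-1)).const_mul 3)).add ((hInt (β+1)).const_mul 3)).add (hInt (β+3)))
    (Filter.Eventually.of_forall fun ω => fun b _ => by
      have h : HasDerivAt (fun b : ℝ => -b * X ω) (-X ω) b := by
        simpa using (hasDerivAt_neg b).mul_const (X ω)
      have h2 := h.exp.const_mul (X ω)
      refine h2.congr_deriv ?_
      ring)
  simpa [neg_mul, integral_neg] using key.2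


end helpers

/-- If `X` is not a.s. constant and `f(β₀) < 0` for some `β₀ > 0`, then there is a unique
`β_c ∈ (0, β₀)` with `f(β_c) = 0`, `f > 0` on `[0, β_c)` and `f < 0` on `(β_c, ∞)`. -/
theorem exists_unique_betac {Ω : Type*} [MeasurableSpace Ω] (P : Measure Ω)
    [IsProbabilityMeasure P] (X : Ω → ℝ) (hX : Measurable X)
    (hInt : ∀ s : ℝ, Integrable (fun ω => Real.exp (-s * X ω)) P)
    (ℓ : ℕ) (hℓ : 3 ≤ ℓ)
    (hconst : ¬ ∃ c : ℝ, ∀ᵐ ω ∂P, X ω = c)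
    (β₀ : ℝ) (hβ₀ : 0 < β₀) (hfβ₀ : fDS P X ℓ β₀ < 0) :
    ∃ βc ∈ Set.Ioo 0 β₀, fDS P X ℓ βc = 0 ∧
      (∀ β' ∈ Set.Ioo 0 β₀, fDS P X ℓ β' = 0 → β' = βc) ∧
      (∀ β ∈ Set.Ico 0 βc, 0 < fDS P X ℓ β) ∧
      (∀ β : ℝ, βc < β → fDS P X ℓ β < 0) := by
  set L : ℝ → ℝ := lam P X with hLdef
  set M : ℝ → ℝ := fun b => ∫ ω, X ω * Real.exp (-b * X ω) ∂P with hMdef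
  set Q : ℝ → ℝ := fun b => ∫ ω, X ω ^ 2 * Real.exp (-b * X ω) ∂P with hQdef
  have Lpos : ∀ b, 0 < L b := by
    intro b
    have : L b = ProbabilityTheory.mgf (fun ω => -X ω) P b := by
      simp only [hLdef, lam, ProbabilityTheory.mgf]
      congr 1; funext ω; ring_nf
    rw [this]
    exact ProbabilityTheory.mgf_pos (by
      refine (hInt b).congr (Filter.Eventually.of_forall fun ω => ?_)
      ring_nf)
  have hL : ∀ b, HasDerivAt L (-(M b)) b := fun b => my_hL P X hX hInt b
  have hM : ∀ b, HasDerivAt M (-(Q b)) b := fun b => my_hM P X hX hInt b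
  set g : ℝ → ℝ := fun b => Real.log (L b) with hgdef
  have hg : ∀ b, HasDerivAt g (-(M b) / L b) b := fun b => (hL b).log (Lpos b).ne'
  set G : ℝ → ℝ := fun b => -(M b) / L b with hGdef
  have hG : ∀ b, HasDerivAt G ((Q b * L b - M b ^ 2) / (L b) ^ 2) b := by
    intro b
    have h := ((hM b).neg.div (hL b) (Lpos b).ne')
    refine h.congr_deriv ?_
    simp only [Pi.neg_apply]
    field_simp
  -- positivity of second derivative
  have hpos : ∀ b, 0 < Q b * L b - M b ^ 2 := by
    intro b
    set m : ℝ := M b / L b with hmdef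
    have hw : ∀ ω, (0:ℝ) < Real.exp (-b * X ω) := fun ω => Real.exp_pos _
    have hVint : Integrable (fun ω => (X ω - m) ^ 2 * Real.exp (-b * X ω)) P := by
      have : Integrable (fun ω => X ω ^ 2 * Real.exp (-b * X ω)
          - (2*m) * (X ω * Real.exp (-b * X ω)) + m ^ 2 * Real.exp (-b * X ω)) P :=
        ((my_intX2 P X hX hInt b).sub ((my_intX P X hX hInt b).const_mul (2*m))).add
          ((hInt b).const_mul (m^2))
      refine this.congr (Filter.Eventually.of_forall fun ω => ?_)
      ring
    have hVval : (∫ ω, (X ω - m) ^ 2 * Real.exp (-b * X ω) ∂P)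
        = Q b - 2*m * M b + m ^ 2 * L b := by
      have heq : (fun ω => (X ω - m) ^ 2 * Real.exp (-b * X ω))
          = fun ω => X ω ^ 2 * Real.exp (-b * X ω)
            - (2*m) * (X ω * Real.exp (-b * X ω)) + m ^ 2 * Real.exp (-b * X ω) := by
        funext ω; ring
      have hA : Integrable (fun ω => X ω ^ 2 * Real.exp (-b * X ω)
          - (2*m) * (X ω * Real.exp (-b * X ω))) P :=
        (my_intX2 P X hX hInt b).sub ((my_intX P X hX hInt b).const_mul (2*m))
      have hB : Integrable (fun ω => m ^ 2 * Real.exp (-b * X ω)) P := (hInt b).const_mul (m^2)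
      rw [heq, integral_add hA hB,
        integral_sub (my_intX2 P X hX hInt b) ((my_intX P X hX hInt b).const_mul (2*m)),
        integral_const_mul, integral_const_mul]
      simp only [hQdef, hMdef, hLdef, lam]
    have hVpos : 0 < ∫ ω, (X ω - m) ^ 2 * Real.exp (-b * X ω) ∂P := by
      have hnn : 0 ≤ ∫ ω, (X ω - m) ^ 2 * Real.exp (-b * X ω) ∂P :=
        integral_nonneg fun ω => by positivity
      rcases lt_or_eq_of_le hnn with h | h
      · exact h
      · exfalso
        have := (integral_eq_zero_iff_of_nonneg (fun ω => by positivity) hVint).1 h.symm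
        refine hconst ⟨m, ?_⟩
        filter_upwards [this] with ω hω
        have : (X ω - m) ^ 2 * Real.exp (-b * X ω) = 0 := hω
        have h2 : (X ω - m) ^ 2 = 0 := by
          rcases mul_eq_zero.1 this with h' | h'
          · exact h'
          · exact absurd h' (hw ω).ne'
        nlinarith [sq_nonneg (X ω - m)]
    have key : Q b * L b - M b ^ 2 = (∫ ω, (X ω - m) ^ 2 * Real.exp (-b * X ω) ∂P) * L b := by
      rw [hVval]
      rw [hmdef]
      field_simp [(Lpos b).ne']
      ring
    rw [key]
    exact mul_pos hVpos (Lpos b)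
  have hGmono : StrictMono G := by
    refine strictMono_of_deriv_pos fun x => ?_
    rw [(hG x).deriv]
    exact div_pos (hpos x) (pow_pos (Lpos x) 2)
  set C : ℝ := Real.log ((ℓ : ℝ) - 1) with hCdef
  have hFx : ∀ x, fDS P X ℓ x = C + g x - x * G x := by
    intro x
    simp only [fDS, annealedCP, hgdef, hGdef, hCdef, hMdef, hLdef]
    ring
  -- strict decrease on [0, ∞)
  have hdec : ∀ a b : ℝ, 0 ≤ a → a < b → fDS P X ℓ b < fDS P X ℓ a := by
    intro a b ha hab
    obtain ⟨c, hc, hc'⟩ := exists_hasDerivAt_eq_slope g G hab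
      (fun x _ => (hg x).continuousAt.continuousWithinAt) (fun x _ => hg x)
    have hba : b - a ≠ 0 := sub_ne_zero.2 hab.ne'
    have h1 : g b - g a = G c * (b - a) := by
      rw [hc', div_mul_cancel₀ _ hba]
    have h2 : G c < G b := hGmono hc.2
    have h3 : G a ≤ G b := hGmono.le_iff_le.2 hab.le
    rw [hFx a, hFx b]
    nlinarith [mul_lt_mul_of_pos_right h2 (sub_pos.2 hab),
      mul_le_mul_of_nonneg_left h3 ha]
  have hF0 : 0 < fDS P X ℓ 0 := by
    have hL0 : L 0 = 1 := by
      simp only [hLdef, lam]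
      simp
    have hg0 : g 0 = 0 := by
      simp only [hgdef]
      rw [hL0, Real.log_one]
    rw [hFx 0, hg0]
    simp only [zero_mul, sub_zero, add_zero, hCdef]
    refine Real.log_pos ?_
    have : (3:ℝ) ≤ (ℓ:ℝ) := by exact_mod_cast hℓ
    linarith
  -- continuity
  have hFcont : Continuous (fDS P X ℓ) := by
    have : Continuous fun x => C + g x - x * G x := by
      refine (continuous_const.add ?_).sub (continuous_id.mul ?_)
      · exact continuous_iff_continuousAt.2 fun x => (hg x).continuousAt
      · exact continuous_iff_continuousAt.2 fun x => (hG x).continuousAt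
    exact this.congr fun x => (hFx x).symm
  -- IVT
  obtain ⟨βc, hβc_mem, hβc⟩ := intermediate_value_Icc' hβ₀.le hFcont.continuousOn
    (Set.mem_Icc.2 ⟨hfβ₀.le, hF0.le⟩)
  have hβc0 : 0 < βc := hβc_mem.1.lt_of_ne fun h => by
    rw [← h] at hβc; exact hF0.ne' hβc
  have hβcβ₀ : βc < β₀ := hβc_mem.2.lt_of_ne fun h => by
    rw [h] at hβc; exact hfβ₀.ne hβc
  refine ⟨βc, ⟨hβc0, hβcβ₀⟩, hβc, ?_, ?_, ?_⟩
  · intro β' hβ' hfβ'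
    rcases lt_trichotomy β' βc with h | h | h
    · exfalso
      have := hdec β' βc hβ'.1.le h
      rw [hβc, hfβ'] at this; exact lt_irrefl _ this
    · exact h
    · exfalso
      have := hdec βc β' hβc0.le h
      rw [hβc, hfβ'] at this; exact lt_irrefl _ this
  · intro β hβ
    have := hdec β βc hβ.1 hβ.2
    rw [hβc] at this; exact this
  · intro β hβ
    have := hdec βc β hβc0.le hβ
    rw [hβc] at this; exact this
end

section
/- Suppose X is not ℙ-almost surely constant, β_c > 0 satisfies f(β_c) = 0 (so that f(β) < 0 for β > β_c), and β > β_c. Set θ_c = β_c/β ∈ (0,1). Then r(θ_c) < 1, and consequently (β/β_c)·h_a(β_c) < h_a(β), i.e. in the strong disorder regime the quenched critical value is strictly below the annealed critical point. -/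
open MeasureTheory Real

/-- The fractional-moment rate `r(θ) = (ℓ-1)·𝔼[(e^{-βX}/((ℓ-1)λ_β))^θ]`. -/
noncomputable def rDS {Ω : Type*} [MeasurableSpace Ω] (P : Measure Ω) (X : Ω → ℝ)
    (ℓ : ℕ) (β θ : ℝ) : ℝ :=
  ((ℓ : ℝ) - 1) * ∫ ω, (Real.exp (-β * X ω) / (((ℓ : ℝ) - 1) * lam P X β)) ^ θ ∂P

lemma exp_sandwich {u a b s : ℝ} (ha : a ≤ s) (hb : s ≤ b) :
    Real.exp (-s * u) ≤ Real.exp (-a * u) + Real.exp (-b * u) := by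
  rcases le_or_gt 0 u with h | h
  · have : -s * u ≤ -a * u := by nlinarith
    exact le_add_of_le_of_nonneg (Real.exp_le_exp.2 this) (Real.exp_pos _).le
  · have : -s * u ≤ -b * u := by nlinarith
    exact le_add_of_nonneg_of_le (Real.exp_pos _).le (Real.exp_le_exp.2 this)

lemma abs_le_exp_add (u : ℝ) : |u| ≤ Real.exp u + Real.exp (-u) := by
  rcases abs_cases u with ⟨h, _⟩ | ⟨h, _⟩
  · calc |u| = u := h
      _ ≤ Real.exp u := by linarith [Real.add_one_le_exp u]
      _ ≤ _ := le_add_of_le_of_nonneg le_rfl (Real.exp_pos _).le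
  · calc |u| = -u := h
      _ ≤ Real.exp (-u) := by linarith [Real.add_one_le_exp (-u)]
      _ ≤ _ := le_add_of_nonneg_of_le (Real.exp_pos _).le le_rfl

section

variable {Ω : Type*} [MeasurableSpace Ω] (P : Measure Ω) [IsProbabilityMeasure P]
    (X : Ω → ℝ) (hX : Measurable X)
    (hInt : ∀ s : ℝ, Integrable (fun ω => Real.exp (-s * X ω)) P)

include hX hInt in
lemma lam_hasDerivAt (t : ℝ) :
    Integrable (fun ω => X ω * Real.exp (-t * X ω)) P ∧
    HasDerivAt (lam P X) (-∫ ω, X ω * Real.exp (-t * X ω) ∂P) t := by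
  have hmeas : ∀ s : ℝ, AEStronglyMeasurable (fun ω => Real.exp (-s * X ω)) P := fun s =>
    ((hX.const_mul (-s)).exp).aestronglyMeasurable
  have hmeas' : AEStronglyMeasurable (fun ω => -(X ω * Real.exp (-t * X ω))) P :=
    ((hX.mul (hX.const_mul (-t)).exp).neg).aestronglyMeasurable
  have key := hasDerivAt_integral_of_dominated_loc_of_deriv_le
    (F := fun (s : ℝ) (ω : Ω) => Real.exp (-s * X ω))
    (F' := fun (s : ℝ) (ω : Ω) => -(X ω * Real.exp (-s * X ω)))
    (x₀ := t)
    (bound := fun ω => 2 * (Real.exp (-(t-2) * X ω) + Real.exp (-(t+2) * X ω)))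
    (μ := P) (Metric.ball_mem_nhds t one_pos)
    (Filter.Eventually.of_forall fun s => hmeas s)
    (hInt t) hmeas'
    ?_ ?_ ?_
  · obtain ⟨h1, h2⟩ := key
    constructor
    · exact h1.neg.congr (Filter.Eventually.of_forall fun ω => by simp)
    · rw [integral_neg] at h2
      exact h2
  · refine Filter.Eventually.of_forall fun ω => fun s hs => ?_
    have hs' : |s - t| < 1 := by simpa [Real.dist_eq] using hs
    have h1 : |X ω| ≤ Real.exp (X ω) + Real.exp (-X ω) := abs_le_exp_add _
    have h2 : Real.exp (-(s-1) * X ω) ≤ Real.exp (-(t-2) * X ω) + Real.exp (-(t+2) * X ω) := by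
      apply exp_sandwich <;> [skip; skip] <;> cases abs_lt.mp hs' <;> linarith
    have h3 : Real.exp (-(s+1) * X ω) ≤ Real.exp (-(t-2) * X ω) + Real.exp (-(t+2) * X ω) := by
      apply exp_sandwich <;> [skip; skip] <;> cases abs_lt.mp hs' <;> linarith
    have hsplit : Real.exp (X ω) * Real.exp (-s * X ω) = Real.exp (-(s-1) * X ω) := by
      rw [← Real.exp_add]; ring_nf
    have hsplit' : Real.exp (-X ω) * Real.exp (-s * X ω) = Real.exp (-(s+1) * X ω) := by
      rw [← Real.exp_add]; ring_nf
    have : ‖-(X ω * Real.exp (-s * X ω))‖ = |X ω| * Real.exp (-s * X ω) := by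
      rw [norm_neg, Real.norm_eq_abs, abs_mul, Real.abs_exp]
    rw [this]
    calc |X ω| * Real.exp (-s * X ω)
        ≤ (Real.exp (X ω) + Real.exp (-X ω)) * Real.exp (-s * X ω) :=
          mul_le_mul_of_nonneg_right h1 (Real.exp_pos _).le
      _ = Real.exp (-(s-1) * X ω) + Real.exp (-(s+1) * X ω) := by
          rw [add_mul, hsplit, hsplit']
      _ ≤ 2 * (Real.exp (-(t-2) * X ω) + Real.exp (-(t+2) * X ω)) := by linarith
  · exact ((hInt (t-2)).add (hInt (t+2))).const_mul 2
  · refine Filter.Eventually.of_forall fun ω => fun s _ => ?_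
    have h1 : HasDerivAt (fun x : ℝ => -x * X ω) (-X ω) s := by
      simpa using ((hasDerivAt_id s).neg.mul_const (X ω))
    have := h1.exp
    exact this.congr_deriv (by ring)

include hInt in
lemma lam_pos (s : ℝ) : 0 < lam P X s := by
  rw [lam, integral_pos_iff_support_of_nonneg (fun ω => (Real.exp_pos _).le) (hInt s)]
  have : Function.support (fun ω => Real.exp (-s * X ω)) = Set.univ := by
    ext ω; simp [Function.support, (Real.exp_pos _).ne']
  rw [this]
  simp

end

/-- In the strong disorder regime `β > β_c`, with `θ_c = β_c/β ∈ (0,1)` one has `r(θ_c) < 1`,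
and hence the quenched critical value `(β/β_c)·h_a(β_c)` is strictly below the annealed
critical point `h_a(β)`. -/
theorem quenched_lt_annealed {Ω : Type*} [MeasurableSpace Ω] (P : Measure Ω)
    [IsProbabilityMeasure P] (X : Ω → ℝ) (hX : Measurable X)
    (hInt : ∀ s : ℝ, Integrable (fun ω => Real.exp (-s * X ω)) P)
    (ℓ : ℕ) (hℓ : 3 ≤ ℓ)
    (hconst : ¬ ∃ c : ℝ, ∀ᵐ ω ∂P, X ω = c)
    (βc β : ℝ) (hβc : 0 < βc) (hfβc : fDS P X ℓ βc = 0)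
    (hstrict : ∀ β' : ℝ, βc < β' → fDS P X ℓ β' < 0) (hβ : βc < β) :
    0 < βc / β ∧ βc / β < 1 ∧ rDS P X ℓ β (βc / β) < 1 ∧
      (β / βc) * annealedCP P X ℓ βc < annealedCP P X ℓ β := by
  have hβpos : 0 < β := lt_trans hβc hβ
  have hβ0 : β ≠ 0 := hβpos.ne'
  have hlam : ∀ s, 0 < lam P X s := lam_pos P X hInt
  -- derivative of g(t) = h_a(t)/t
  set g : ℝ → ℝ := fun t => annealedCP P X ℓ t / t with hg
  have hgderiv : ∀ t : ℝ, 0 < t →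
      HasDerivAt g ((-(∫ ω, X ω * Real.exp (-t * X ω) ∂P) / lam P X t * t
        - annealedCP P X ℓ t) / t ^ 2) t := by
    intro t ht
    have hd := (lam_hasDerivAt P X hX hInt t).2
    have hha : HasDerivAt (fun s => annealedCP P X ℓ s)
        (-(∫ ω, X ω * Real.exp (-t * X ω) ∂P) / lam P X t) t := by
      have := (hd.log (hlam t).ne').const_add (Real.log ((ℓ : ℝ) - 1))
      simpa [annealedCP] using this
    have := hha.div (hasDerivAt_id t) ht.ne'
    exact this.congr_deriv (by simp only [id, mul_one])
  -- key monotonicity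
  have hkey : g βc < g β := by
    have hmono : StrictMonoOn g (Set.Icc βc β) := by
      apply strictMonoOn_of_deriv_pos (convex_Icc βc β)
      · intro x hx
        have hx0 : 0 < x := lt_of_lt_of_le hβc hx.1
        exact (hgderiv x hx0).continuousAt.continuousWithinAt
      · intro x hx
        rw [interior_Icc] at hx
        have hx0 : 0 < x := lt_trans hβc hx.1
        rw [(hgderiv x hx0).deriv]
        have hf := hstrict x hx.1
        rw [fDS] at hf
        have hnum : 0 < -(∫ ω, X ω * Real.exp (-x * X ω) ∂P) / lam P X x * x
            - annealedCP P X ℓ x := by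
          have : x * (∫ ω, X ω * Real.exp (-x * X ω) ∂P) / lam P X x
              = -((-(∫ ω, X ω * Real.exp (-x * X ω) ∂P)) / lam P X x * x) := by
            field_simp
          rw [this] at hf
          linarith
        positivity
    exact hmono (Set.left_mem_Icc.2 hβ.le) (Set.right_mem_Icc.2 hβ.le) hβ
  have hkey' : annealedCP P X ℓ βc / βc < annealedCP P X ℓ β / β := hkey
  have hquench : (β / βc) * annealedCP P X ℓ βc < annealedCP P X ℓ β := by
    have := (div_lt_div_iff₀ hβc hβpos).mp hkey'
    rw [div_mul_eq_mul_div, div_lt_iff₀ hβc]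
    linarith
  have hA : (0:ℝ) < (ℓ : ℝ) - 1 := by
    have : (3:ℝ) ≤ (ℓ:ℝ) := by exact_mod_cast hℓ
    linarith
  -- compute r(θc)
  set θ : ℝ := βc / β with hθ
  have hθpos : 0 < θ := div_pos hβc hβpos
  have hθlt : θ < 1 := (div_lt_one hβpos).2 hβ
  refine ⟨hθpos, hθlt, ?_, hquench⟩
  set C : ℝ := ((ℓ : ℝ) - 1) * lam P X β with hC
  have hCpos : 0 < C := mul_pos hA (hlam β)
  have hpt : ∀ ω, (Real.exp (-β * X ω) / C) ^ θ = Real.exp (-βc * X ω) / C ^ θ := by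
    intro ω
    rw [Real.div_rpow (Real.exp_pos _).le hCpos.le, ← Real.exp_mul]
    congr 2
    rw [hθ, div_eq_mul_inv]
    linear_combination (-(X ω) * βc) * (mul_inv_cancel₀ hβ0)
  have hrval : rDS P X ℓ β θ = ((ℓ : ℝ) - 1) * (lam P X βc / C ^ θ) := by
    rw [rDS]
    congr 1
    rw [show (fun ω => (Real.exp (-β * X ω) / (((ℓ:ℝ) - 1) * lam P X β)) ^ θ)
        = fun ω => Real.exp (-βc * X ω) / C ^ θ from funext hpt, integral_div]
    rfl
  have hCθ : 0 < C ^ θ := Real.rpow_pos_of_pos hCpos θ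
  have hrpos : 0 < rDS P X ℓ β θ := by
    rw [hrval]
    exact mul_pos hA (div_pos (hlam βc) hCθ)
  rw [← Real.log_neg_iff hrpos]
  have hlog : Real.log (rDS P X ℓ β θ) = annealedCP P X ℓ βc - θ * annealedCP P X ℓ β := by
    rw [hrval, Real.log_mul hA.ne' (div_pos (hlam βc) hCθ).ne', Real.log_div (hlam βc).ne'
      hCθ.ne', Real.log_rpow hCpos, hC, Real.log_mul hA.ne' (hlam β).ne',
      annealedCP, annealedCP]
    ring
  rw [hlog]
  -- annealedCP βc < θ * annealedCP β
  have : annealedCP P X ℓ βc < θ * annealedCP P X ℓ β := by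
    rw [hθ]
    rw [div_lt_div_iff₀ hβc hβpos] at hkey'
    rw [div_mul_eq_mul_div, lt_div_iff₀ hβpos]
    linarith
  linarith
end
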